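/- Let f = Σ_{r=0}^n x_r^{d_1} g_r be a simplicial Nagata polynomial of bidegree (d_1,d_2) (so each g_r is a square-free monomial of degree d_2). Then for 0 ≤ j ≤ d_2: dim_K A_{(0,j)} equals the number of j-element subsets F ⊆ {u_1,…,u_m} such that the product of the variables in F divides at least one g_r; for 1 ≤ i ≤ d_1−1, dim_K A_{(i,j)} = (n+1)·C(d_2,j) (binomial coefficient), with basis the classes of the monomials X_s^i·U_{s_1}⋯U_{s_j} where {u_{s_1},…,u_{s_j}} is a j-element subset of the support of g_s; dim_K A_{(i,0)} = n+1 for 1 ≤ i ≤ d_1; and dim_K A_{(d_1,j)} equals the number of (d_2−j)-element subsets F ⊆ {u_1,…,u_m} whose product divides at least one g_r. -/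

import Mathlib

open MvPolynomial

namespace CW

variable {σ K : Type*} [CommSemiring K]

/-- A generic "monomial contraction-type" action of the polynomial ring on itself,
determined by a structure coefficient `ν c a` (the coefficient produced when the
operator monomial with exponent `a` acts on the monomial with exponent `c`). -/
noncomputable def genAct (ν : (σ →₀ ℕ) → (σ →₀ ℕ) → K) (α f : MvPolynomial σ K) :
    MvPolynomial σ K :=
  Finsupp.sum (AddMonoidAlgebra.coeff α) fun a ca =>
    Finsupp.sum (AddMonoidAlgebra.coeff f) fun c cf => monomial (c - a) (ν c a * (ca * cf))

theorem genAct_zero_left (ν : (σ →₀ ℕ) → (σ →₀ ℕ) → K) (f : MvPolynomial σ K) :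
    genAct ν 0 f = 0 := by
  unfold genAct
  rw [AddMonoidAlgebra.coeff_zero, Finsupp.sum_zero_index]

theorem genAct_zero_right (ν : (σ →₀ ℕ) → (σ →₀ ℕ) → K) (α : MvPolynomial σ K) :
    genAct ν α 0 = 0 := by
  unfold genAct
  simp only [AddMonoidAlgebra.coeff_zero, Finsupp.sum_zero_index, Finsupp.sum_fun_zero]

theorem genAct_add_left (ν : (σ →₀ ℕ) → (σ →₀ ℕ) → K) (α β f : MvPolynomial σ K) :
    genAct ν (α + β) f = genAct ν α f + genAct ν β f := by
  unfold genAct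
  rw [AddMonoidAlgebra.coeff_add]
  apply Finsupp.sum_add_index'
  · intro a
    simp only [mul_zero, zero_mul, map_zero, Finsupp.sum_fun_zero]
  · intro a b₁ b₂
    rw [← Finsupp.sum_add]
    apply Finsupp.sum_congr
    intro c _
    rw [add_mul, mul_add, map_add]

theorem genAct_add_right (ν : (σ →₀ ℕ) → (σ →₀ ℕ) → K) (α f g : MvPolynomial σ K) :
    genAct ν α (f + g) = genAct ν α f + genAct ν α g := by
  unfold genAct
  rw [← Finsupp.sum_add]
  apply Finsupp.sum_congr
  intro a _
  rw [AddMonoidAlgebra.coeff_add]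
  apply Finsupp.sum_add_index'
  · intro c
    simp only [mul_zero, map_zero]
  · intro c c₁ c₂
    rw [mul_add, mul_add, map_add]

theorem genAct_monomial (ν : (σ →₀ ℕ) → (σ →₀ ℕ) → K) (a c : σ →₀ ℕ) (r s : K) :
    genAct ν (monomial a r) (monomial c s) = monomial (c - a) (ν c a * (r * s)) := by
  unfold genAct
  rw [← single_eq_monomial a r, ← single_eq_monomial c s]
  rw [AddMonoidAlgebra.coeff_single, AddMonoidAlgebra.coeff_single]
  rw [Finsupp.sum_single_index, Finsupp.sum_single_index]
  · simp only [mul_zero, map_zero]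
  · simp only [mul_zero, zero_mul, map_zero, Finsupp.sum_fun_zero]

theorem genAct_mul {ν : (σ →₀ ℕ) → (σ →₀ ℕ) → K}
    (hν : ∀ c a b, ν c (a + b) = ν c b * ν (c - b) a) (α β f : MvPolynomial σ K) :
    genAct ν (α * β) f = genAct ν α (genAct ν β f) := by
  induction α using MvPolynomial.induction_on' with
  | add p q hp hq => rw [add_mul, genAct_add_left, hp, hq, genAct_add_left]
  | monomial a r =>
    induction β using MvPolynomial.induction_on' with
    | add p q hp hq =>
      rw [mul_add, genAct_add_left, hp, hq, ← genAct_add_right, genAct_add_left]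
    | monomial b s =>
      induction f using MvPolynomial.induction_on' with
      | add p q hp hq =>
        rw [genAct_add_right, hp, hq, ← genAct_add_right, ← genAct_add_right]
      | monomial c t =>
        rw [monomial_mul, genAct_monomial, genAct_monomial, genAct_monomial,
          show c - (a + b) = c - b - a from by rw [tsub_tsub, add_comm], hν]
        congr 1
        ring

/-- The annihilator ideal of `f` under the action `genAct ν`. -/
noncomputable def annG (ν : (σ →₀ ℕ) → (σ →₀ ℕ) → K)
    (hν : ∀ c a b, ν c (a + b) = ν c b * ν (c - b) a) (f : MvPolynomial σ K) :
    Ideal (MvPolynomial σ K) where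
  carrier := {α | genAct ν α f = 0}
  zero_mem' := genAct_zero_left ν f
  add_mem' := by
    intro a b ha hb
    show genAct ν (a + b) f = 0
    rw [genAct_add_left, ha, hb, add_zero]
  smul_mem' := by
    intro c α hα
    show genAct ν (c * α) f = 0
    rw [genAct_mul hν, hα, genAct_zero_right]

/-- Structure coefficient of the contraction (apolarity) action: `X^a` sends `x^c`
to `x^(c-a)` if `a ≤ c` and to `0` otherwise. -/
noncomputable def cnu (c a : σ →₀ ℕ) : K :=
  open scoped Classical in if a ≤ c then 1 else 0

theorem cnu_mul (c a b : σ →₀ ℕ) :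
    (cnu c (a + b) : K) = cnu c b * cnu (c - b) a := by
  classical
  unfold cnu
  by_cases hb : b ≤ c
  · by_cases ha : a ≤ c - b
    · have h : a + b ≤ c := (le_tsub_iff_right hb).mp ha
      simp [hb, ha, h]
    · have h : ¬ a + b ≤ c := fun h => ha ((le_tsub_iff_right hb).mpr h)
      simp [hb, ha, h]
  · have h : ¬ a + b ≤ c := fun h => hb (le_trans le_add_self h)
    simp [hb, h]

/-- The contraction action `α ∘ f`. -/
noncomputable def cAct (α f : MvPolynomial σ K) : MvPolynomial σ K :=
  genAct cnu α f

/-- The annihilator `Ann(f)` of `f` under the contraction action, as an ideal. -/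
noncomputable def cAnn (f : MvPolynomial σ K) : Ideal (MvPolynomial σ K) :=
  annG cnu cnu_mul f

theorem mem_cAnn {f α : MvPolynomial σ K} : α ∈ cAnn f ↔ cAct α f = 0 := Iff.rfl

/-- The `K`-submodule of polynomials all of whose monomials satisfy `P`. -/
noncomputable def bihom (K : Type*) [CommSemiring K] {σ : Type*} (P : (σ →₀ ℕ) → Prop) :
    Submodule K (MvPolynomial σ K) where
  carrier := {p | ∀ c ∈ p.support, P c}
  zero_mem' := by
    intro c hc
    simp at hc
  add_mem' := by
    classical
    intro p q hp hq c hc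
    rcases Finset.mem_union.mp (MvPolynomial.support_add hc) with h | h
    · exact hp c h
    · exact hq c h
  smul_mem' := by
    intro k p hp c hc
    exact hp c (MvPolynomial.support_smul hc)

/-- The x-degree of an exponent vector. -/
def degX {n m : ℕ} (c : (Fin (n + 1) ⊕ Fin m) →₀ ℕ) : ℕ := ∑ r, c (Sum.inl r)

/-- The u-degree of an exponent vector. -/
def degU {n m : ℕ} (c : (Fin (n + 1) ⊕ Fin m) →₀ ℕ) : ℕ := ∑ k, c (Sum.inr k)

/-- The bihomogeneous component `T_(i,j)`. -/
noncomputable def Tbi (K : Type*) [CommSemiring K] {n m : ℕ} (i j : ℕ) :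
    Submodule K (MvPolynomial (Fin (n + 1) ⊕ Fin m) K) :=
  bihom K fun c => degX c = i ∧ degU c = j

/-- The bigraded component `A_(i,j)` of `A = T ⧸ Ann(f)`: the image of `T_(i,j)`
in the quotient. -/
noncomputable def Abi {K : Type*} [Field K] {n m : ℕ}
    (f : MvPolynomial (Fin (n + 1) ⊕ Fin m) K) (i j : ℕ) :
    Submodule K (MvPolynomial (Fin (n + 1) ⊕ Fin m) K ⧸ cAnn f) :=
  (Tbi K i j).map (Ideal.Quotient.mkₐ K (cAnn f)).toLinearMap


/-! ### Auxiliary infrastructure -/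

section AuxAction

theorem cAct_monomial_monomial (a c : σ →₀ ℕ) (r s : K) :
    cAct (monomial a r) (monomial c s) =
      if a ≤ c then monomial (c - a) (r * s) else 0 := by
  classical
  rw [cAct, genAct_monomial, cnu]
  split_ifs with h
  · rw [one_mul]
  · rw [zero_mul, map_zero]

theorem cAct_sum {ι : Type*} (s : Finset ι) (α : MvPolynomial σ K)
    (h : ι → MvPolynomial σ K) :
    cAct α (∑ r ∈ s, h r) = ∑ r ∈ s, cAct α (h r) := by
  classical
  induction s using Finset.induction_on with
  | empty => simpa [cAct] using genAct_zero_right cnu α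
  | insert _ _ hx ih =>
      rw [Finset.sum_insert hx, Finset.sum_insert hx, ← ih]
      exact genAct_add_right cnu α _ _

theorem cAct_C (k : K) (p : MvPolynomial σ K) :
    cAct (C k) p = k • p := by
  induction p using MvPolynomial.induction_on' with
  | monomial c t =>
      rw [show (C k : MvPolynomial σ K) = monomial 0 k from rfl, cAct_monomial_monomial,
        if_pos zero_le, tsub_zero, smul_monomial, smul_eq_mul]
  | add p q hp hq =>
      rw [show cAct (C k) (p + q) = cAct (C k) p + cAct (C k) q from
        genAct_add_right _ _ _ _, hp, hq, smul_add]

/-- The contraction action as a linear map in its first argument. -/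
noncomputable def cActL (f : MvPolynomial σ K) :
    MvPolynomial σ K →ₗ[K] MvPolynomial σ K where
  toFun α := cAct α f
  map_add' α β := genAct_add_left cnu α β f
  map_smul' k α := by
    simp only [RingHom.id_apply]
    rw [smul_eq_C_mul, show cAct (C k * α) f = cAct (C k) (cAct α f) from
      genAct_mul cnu_mul _ _ _, cAct_C]

@[simp] theorem cActL_apply (f α : MvPolynomial σ K) : cActL f α = cAct α f := rfl

theorem mem_bihom {P : (σ →₀ ℕ) → Prop} {p : MvPolynomial σ K} :
    p ∈ bihom K P ↔ ∀ c ∈ p.support, P c := Iff.rfl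

theorem monomial_mem_bihom {P : (σ →₀ ℕ) → Prop} {c : σ →₀ ℕ} {k : K}
    (h : P c) : monomial c k ∈ bihom K P := by
  classical
  intro c' hc'
  rw [MvPolynomial.support_monomial] at hc'
  split_ifs at hc' with h0
  · simp at hc'
  · rw [Finset.mem_singleton] at hc'; rwa [hc']

end AuxAction

section AuxField
variable {F : Type*} [Field F] {σ' : Type*}

theorem li_coeff {ι : Type*} (v : ι → MvPolynomial σ' F) (d : ι → (σ' →₀ ℕ))
    (h1 : ∀ p, coeff (d p) (v p) = 1)
    (h2 : ∀ p q, p ≠ q → coeff (d p) (v q) = 0) :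
    LinearIndependent F v := by
  rw [linearIndependent_iff']
  intro s gc hsum p hp
  have h := congrArg (coeff (d p)) hsum
  rw [MvPolynomial.coeff_sum, coeff_zero,
    Finset.sum_eq_single_of_mem p hp (fun q _ hq => by
      rw [MvPolynomial.coeff_smul, h2 p q (Ne.symm hq), smul_zero])] at h
  rwa [MvPolynomial.coeff_smul, h1, smul_eq_mul, mul_one] at h

theorem li_monomials {ι : Type*} {D : ι → (σ' →₀ ℕ)} (hD : Function.Injective D) :
    LinearIndependent F fun p => (monomial (D p) (1 : F)) := by
  classical
  refine li_coeff _ D (fun p => ?_) (fun p q hpq => ?_)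
  · rw [coeff_monomial, if_pos rfl]
  · rw [coeff_monomial, if_neg fun h => hpq (hD h).symm]

theorem bihom_eq_span (P : (σ' →₀ ℕ) → Prop) :
    bihom F P = Submodule.span F ((fun c => monomial c (1 : F)) '' setOf P) := by
  apply le_antisymm
  · intro p hp
    rw [p.as_sum]
    refine Submodule.sum_mem _ fun c hc => ?_
    have hmono : (monomial c (coeff c p) : MvPolynomial σ' F)
        = (coeff c p) • monomial c 1 := by
      rw [smul_monomial, smul_eq_mul, mul_one]
    rw [hmono]
    exact Submodule.smul_mem _ _ (Submodule.subset_span ⟨c, hp c hc, rfl⟩)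
  · rw [Submodule.span_le]
    rintro _ ⟨c, hc, rfl⟩
    exact monomial_mem_bihom hc

theorem qmap_eq_zero_iff {f x : MvPolynomial σ' F} :
    (Ideal.Quotient.mkₐ F (cAnn f)).toLinearMap x = 0 ↔ cAct x f = 0 := by
  rw [AlgHom.toLinearMap_apply, Ideal.Quotient.mkₐ_eq_mk, Ideal.Quotient.eq_zero_iff_mem]
  exact mem_cAnn

theorem li_q {f : MvPolynomial σ' F} {ι : Type*} {u : ι → MvPolynomial σ' F}
    (hli : LinearIndependent F fun p => cAct (u p) f) :
    LinearIndependent F fun p => (Ideal.Quotient.mkₐ F (cAnn f)).toLinearMap (u p) := by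
  rw [linearIndependent_iff'] at hli ⊢
  intro s gc hsum p hp
  refine hli s gc ?_ p hp
  have h0 : (Ideal.Quotient.mkₐ F (cAnn f)).toLinearMap (∑ q ∈ s, gc q • u q) = 0 := by
    rw [map_sum]
    simpa only [map_smul] using hsum
  have h1 : cAct (∑ q ∈ s, gc q • u q) f = 0 := qmap_eq_zero_iff.mp h0
  have h2 : (∑ q ∈ s, gc q • cAct (u q) f) = cAct (∑ q ∈ s, gc q • u q) f := by
    rw [show cAct (∑ q ∈ s, gc q • u q) f = cActL f (∑ q ∈ s, gc q • u q) from rfl,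
      map_sum]
    simp only [map_smul, cActL_apply]
  rw [h2, h1]

/-- Master lemma: a basis for a graded piece of the apolar algebra, given a family of
monomials whose images under contraction are linearly independent and which cover all
standard monomials of the graded piece up to the annihilator. -/
theorem master (f : MvPolynomial σ' F)
    {ι : Type*} [Fintype ι] (P : (σ' →₀ ℕ) → Prop) (c : ι → (σ' →₀ ℕ))
    (hP : ∀ p, P (c p))
    (hli : LinearIndependent F fun p => cAct (monomial (c p) (1 : F)) f)
    (hco : ∀ e, P e → cAct (monomial e (1 : F)) f = 0 ∨
        ∃ p, cAct (monomial e (1 : F)) f = cAct (monomial (c p) (1 : F)) f) :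
    ∃ b : Module.Basis ι F
        (Submodule.map (Ideal.Quotient.mkₐ F (cAnn f)).toLinearMap (bihom F P)),
      ∀ p, (b p : MvPolynomial σ' F ⧸ cAnn f)
        = Ideal.Quotient.mk (cAnn f) (monomial (c p) 1) := by
  classical
  set q := (Ideal.Quotient.mkₐ F (cAnn f)).toLinearMap with hq
  have hqli : LinearIndependent F fun p => q (monomial (c p) (1 : F)) := li_q hli
  have hspan : Submodule.span F (Set.range fun p => q (monomial (c p) (1 : F))) =
      Submodule.map q (bihom F P) := by
    apply le_antisymm
    · rw [Submodule.span_le]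
      rintro _ ⟨p, rfl⟩
      exact Submodule.mem_map_of_mem (monomial_mem_bihom (hP p))
    · rw [bihom_eq_span, Submodule.map_span, Submodule.span_le, Set.image_image]
      rintro _ ⟨e, he, rfl⟩
      rcases hco e he with h0 | ⟨p, hp⟩
      · have h00 : q (monomial e 1) = 0 := qmap_eq_zero_iff.mpr h0
        simp only [h00]
        exact Submodule.zero_mem _
      · have hdiff : q (monomial e 1 - monomial (c p) 1) = 0 := by
          apply qmap_eq_zero_iff.mpr
          rw [show cAct (monomial e 1 - monomial (c p) 1) f
              = cAct (monomial e (1:F)) f - cAct (monomial (c p) (1:F)) f from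
            map_sub (cActL f) _ _, hp, sub_self]
        rw [map_sub, sub_eq_zero] at hdiff
        simp only [hdiff]
        exact Submodule.subset_span ⟨p, rfl⟩
  refine ⟨(Module.Basis.span hqli).map (LinearEquiv.ofEq _ _ hspan), fun p => ?_⟩
  rw [Module.Basis.map_apply, LinearEquiv.coe_ofEq_apply, Module.Basis.span_apply]
  rfl

end AuxField

section AuxSum
variable {n m : ℕ}

/-- `emb r i b` is the exponent vector `i·e_{x_r} + b` (with `b` in the `u`-variables). -/
noncomputable def emb (r : Fin (n + 1)) (i : ℕ) (b : Fin m →₀ ℕ) :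
    (Fin (n + 1) ⊕ Fin m) →₀ ℕ :=
  Finsupp.single (Sum.inl r) i + b.mapDomain Sum.inr

theorem mapDomain_inr_apply_inl (b : Fin m →₀ ℕ) (r' : Fin (n + 1)) :
    b.mapDomain Sum.inr (Sum.inl r') = 0 :=
  Finsupp.mapDomain_notin_range (f := Sum.inr) b (Sum.inl r') (by simp)

theorem mapDomain_inr_apply_inr (b : Fin m →₀ ℕ) (k : Fin m) :
    b.mapDomain (Sum.inr : Fin m → Fin (n + 1) ⊕ Fin m) (Sum.inr k) = b k :=
  Finsupp.mapDomain_apply Sum.inr_injective _ _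

theorem emb_apply_inl (r : Fin (n + 1)) (i : ℕ) (b : Fin m →₀ ℕ) (r' : Fin (n + 1)) :
    emb r i b (Sum.inl r') = if r' = r then i else 0 := by
  classical
  rw [emb, Finsupp.add_apply, mapDomain_inr_apply_inl, add_zero, Finsupp.single_apply]
  by_cases h : r' = r
  · subst h; rw [if_pos rfl, if_pos rfl]
  · rw [if_neg (fun hh => h (Sum.inl.inj hh).symm), if_neg h]

theorem emb_apply_inr (r : Fin (n + 1)) (i : ℕ) (b : Fin m →₀ ℕ) (k : Fin m) :
    emb r i b (Sum.inr k) = b k := by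
  classical
  rw [emb, Finsupp.add_apply, mapDomain_inr_apply_inr, Finsupp.single_apply,
    if_neg (fun hh => Sum.inl_ne_inr hh), zero_add]

theorem degX_emb (r : Fin (n + 1)) (i : ℕ) (b : Fin m →₀ ℕ) : degX (emb r i b) = i := by
  classical
  rw [degX]
  simp only [emb_apply_inl]
  exact Fintype.sum_ite_eq' r (fun _ => i)

theorem degU_emb (r : Fin (n + 1)) (i : ℕ) (b : Fin m →₀ ℕ) :
    degU (emb r i b) = ∑ k, b k := by
  rw [degU]
  simp only [emb_apply_inr]

theorem emb_le_emb_iff {r : Fin (n + 1)} {i i' : ℕ} {b b' : Fin m →₀ ℕ} :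
    emb r i b ≤ emb r i' b' ↔ i ≤ i' ∧ b ≤ b' := by
  classical
  rw [Finsupp.le_def, Finsupp.le_def]
  constructor
  · intro h
    exact ⟨by simpa [emb_apply_inl] using h (Sum.inl r),
      fun k => by simpa [emb_apply_inr] using h (Sum.inr k)⟩
  · rintro ⟨h1, h2⟩ x
    cases x with
    | inl r' =>
        rw [emb_apply_inl, emb_apply_inl]
        split_ifs
        · exact h1
        · exact le_refl 0
    | inr k =>
        rw [emb_apply_inr, emb_apply_inr]
        exact h2 k

theorem emb_sub_emb (r : Fin (n + 1)) (i i' : ℕ) (b b' : Fin m →₀ ℕ) :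
    emb r i' b' - emb r i b = emb r (i' - i) (b' - b) := by
  classical
  ext x
  rw [Finsupp.tsub_apply]
  cases x with
  | inl r' =>
      rw [emb_apply_inl, emb_apply_inl, emb_apply_inl]
      split_ifs
      · rfl
      · rfl
  | inr k =>
      rw [emb_apply_inr, emb_apply_inr, emb_apply_inr, Finsupp.tsub_apply]

theorem emb_zero (r r' : Fin (n + 1)) (b : Fin m →₀ ℕ) : emb r 0 b = emb r' 0 b := by
  classical
  ext x
  cases x with
  | inl s =>
      rw [emb_apply_inl, emb_apply_inl]
      split_ifs <;> rfl
  | inr k => rw [emb_apply_inr, emb_apply_inr]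

theorem emb_zero_eq (r : Fin (n + 1)) (b : Fin m →₀ ℕ) :
    emb r 0 b = b.mapDomain Sum.inr := by
  rw [emb, Finsupp.single_zero, zero_add]

theorem emb_inj {r r' : Fin (n + 1)} {i i' : ℕ} {b b' : Fin m →₀ ℕ} (hi : 1 ≤ i)
    (h : emb r i b = emb r' i' b') : r = r' ∧ i = i' ∧ b = b' := by
  classical
  have h1 := DFunLike.congr_fun h (Sum.inl r)
  rw [emb_apply_inl, emb_apply_inl, if_pos rfl] at h1
  have hrr : r = r' := by
    by_contra hne
    rw [if_neg hne] at h1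
    omega
  subst hrr
  rw [if_pos rfl] at h1
  refine ⟨rfl, h1, ?_⟩
  ext k
  have h2 := DFunLike.congr_fun h (Sum.inr k)
  rwa [emb_apply_inr, emb_apply_inr] at h2

/-- Restriction of an exponent vector to the `u`-variables. -/
noncomputable def uPart (c : (Fin (n + 1) ⊕ Fin m) →₀ ℕ) : Fin m →₀ ℕ :=
  Finsupp.comapDomain Sum.inr c Sum.inr_injective.injOn

theorem uPart_apply (c : (Fin (n + 1) ⊕ Fin m) →₀ ℕ) (k : Fin m) :
    uPart c k = c (Sum.inr k) := rfl

theorem decomp_zero {c : (Fin (n + 1) ⊕ Fin m) →₀ ℕ} (h : degX c = 0) (r : Fin (n + 1)) :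
    c = emb r 0 (uPart c) := by
  classical
  ext x
  cases x with
  | inl r' =>
      rw [emb_apply_inl]
      have h0 : c (Sum.inl r') = 0 := by
        rw [degX] at h
        exact Finset.sum_eq_zero_iff.mp h r' (Finset.mem_univ _)
      rw [h0]
      split_ifs <;> rfl
  | inr k => rw [emb_apply_inr, uPart_apply]

theorem decomp_pos {c : (Fin (n + 1) ⊕ Fin m) →₀ ℕ} {i : ℕ} {r : Fin (n + 1)}
    (hi : 1 ≤ i) (hd : degX c = i)
    (hz : ∀ r', r' ≠ r → c (Sum.inl r') = 0) : c = emb r i (uPart c) := by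
  classical
  have hc : c (Sum.inl r) = i := by
    rw [degX] at hd
    rw [← hd]
    exact (Finset.sum_eq_single_of_mem r (Finset.mem_univ _)
      (fun r' _ h => hz r' h)).symm
  ext x
  cases x with
  | inl r' =>
      rw [emb_apply_inl]
      by_cases h : r' = r
      · subst h; rw [if_pos rfl, hc]
      · rw [if_neg h, hz r' h]
  | inr k => rw [emb_apply_inr, uPart_apply]

theorem le_emb_inl {c : (Fin (n + 1) ⊕ Fin m) →₀ ℕ} {r : Fin (n + 1)} {i : ℕ}
    {b : Fin m →₀ ℕ} (h : c ≤ emb r i b) (r' : Fin (n + 1)) (hne : r' ≠ r) :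
    c (Sum.inl r') = 0 := by
  classical
  have := Finsupp.le_def.mp h (Sum.inl r')
  rw [emb_apply_inl, if_neg hne] at this
  omega

theorem le_emb_inr {c : (Fin (n + 1) ⊕ Fin m) →₀ ℕ} {r : Fin (n + 1)} {i : ℕ}
    {b : Fin m →₀ ℕ} (h : c ≤ emb r i b) : uPart c ≤ b := by
  intro k
  have := Finsupp.le_def.mp h (Sum.inr k)
  rwa [emb_apply_inr, ← uPart_apply] at this

theorem le_emb_unique {c : (Fin (n + 1) ⊕ Fin m) →₀ ℕ} {i : ℕ} (hi : 1 ≤ i)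
    (hd : degX c = i) {r r' : Fin (n + 1)} {i₁ i₂ : ℕ} {b b' : Fin m →₀ ℕ}
    (h : c ≤ emb r i₁ b) (h' : c ≤ emb r' i₂ b') : r = r' := by
  by_contra hne
  have h1 : c (Sum.inl r) = i := by
    have := decomp_pos hi hd (fun s hs => le_emb_inl h s hs)
    rw [this, emb_apply_inl, if_pos rfl]
  have h2 : c (Sum.inl r) = 0 := le_emb_inl h' r hne
  omega

/-- The indicator finsupp of a finite set. -/
noncomputable def ind (F : Finset (Fin m)) : Fin m →₀ ℕ := ∑ k ∈ F, Finsupp.single k 1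

theorem ind_apply (F : Finset (Fin m)) (k : Fin m) :
    ind F k = if k ∈ F then 1 else 0 := by
  classical
  rw [ind, Finset.sum_apply', Finset.sum_congr rfl fun k' _ => Finsupp.single_apply]
  exact Finset.sum_ite_eq' F k fun _ => 1

theorem ind_le_iff {F : Finset (Fin m)} {b : Fin m →₀ ℕ} :
    ind F ≤ b ↔ ∀ k ∈ F, 1 ≤ b k := by
  classical
  rw [Finsupp.le_def]
  constructor
  · intro h k hk
    have := h k
    rwa [ind_apply, if_pos hk] at this
  · intro h k
    rw [ind_apply]
    split_ifs with hk
    · exact h k hk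
    · exact Nat.zero_le _

theorem ind_inj {F F' : Finset (Fin m)} (h : ind F = ind F') : F = F' := by
  classical
  ext k
  have h1 := DFunLike.congr_fun h k
  rw [ind_apply, ind_apply] at h1
  split_ifs at h1 <;> simp_all

theorem sum_ind (F : Finset (Fin m)) : ∑ k, ind F k = F.card := by
  classical
  simp only [ind_apply]
  rw [Finset.sum_ite_mem, Finset.univ_inter, Finset.sum_const, smul_eq_mul, mul_one]

theorem eq_ind_support {b : Fin m →₀ ℕ} (hb : ∀ k, b k ≤ 1) : b = ind b.support := by
  classical
  ext k
  rw [ind_apply]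
  by_cases h : k ∈ b.support
  · rw [if_pos h]
    have h1 := Finsupp.mem_support_iff.mp h
    have h2 := hb k
    omega
  · rw [if_neg h]
    exact Finsupp.notMem_support_iff.mp h

theorem sq_card {b : Fin m →₀ ℕ} (hb : ∀ k, b k ≤ 1) : ∑ k, b k = b.support.card := by
  conv_lhs => rw [eq_ind_support hb]
  rw [sum_ind]

theorem sum_sub_finsupp {b c : Fin m →₀ ℕ} (h : b ≤ c) :
    ∑ k, (c - b) k = (∑ k, c k) - ∑ k, b k := by
  simp only [Finsupp.tsub_apply]
  exact Finset.sum_tsub_distrib _ fun k _ => Finsupp.le_def.mp h k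

theorem finsupp_sub_sub {b c : Fin m →₀ ℕ} (h : b ≤ c) : c - (c - b) = b := by
  ext k
  rw [Finsupp.tsub_apply, Finsupp.tsub_apply]
  have := Finsupp.le_def.mp h k
  omega

theorem finsupp_sub_inj {a b b' : Fin m →₀ ℕ} (hb : b ≤ a) (hb' : b' ≤ a)
    (h : a - b = a - b') : b = b' := by
  ext k
  have h1 := DFunLike.congr_fun h k
  rw [Finsupp.tsub_apply, Finsupp.tsub_apply] at h1
  have h2 := Finsupp.le_def.mp hb k
  have h3 := Finsupp.le_def.mp hb' k
  omega

theorem card_subtype_filter (j : ℕ) (pred : Finset (Fin m) → Prop) [DecidablePred pred] :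
    Fintype.card {F : Finset (Fin m) // F.card = j ∧ pred F} =
      ((Finset.univ.powersetCard j).filter pred).card := by
  classical
  rw [Fintype.card_subtype]
  congr 1
  ext F
  simp [Finset.mem_powersetCard, and_comm]

end AuxSum

open MvPolynomial in
theorem stmt_5 {K : Type*} [Field K] [CharZero K] (n m d₁ d₂ : ℕ)
    (hd₁ : 1 ≤ d₁) (hd₂ : 2 ≤ d₂)
    (g : Fin (n + 1) → (Fin m →₀ ℕ))
    (hgdeg : ∀ r, (∑ k, g r k) = d₂)
    (hginj : Function.Injective g)
    (hsqfree : ∀ r k, g r k ≤ 1)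
    (f : MvPolynomial (Fin (n + 1) ⊕ Fin m) K)
    (hf : f = ∑ r, X (Sum.inl r) ^ d₁ * monomial ((g r).mapDomain Sum.inr) 1) :
    -- `dim A_(0,j)` is the number of `j`-element subsets whose product divides some `g_r`
    (∀ j ≤ d₂, Module.finrank K (Abi f 0 j) =
      (((Finset.univ : Finset (Fin m)).powersetCard j).filter
        fun F => ∃ r, ∀ k ∈ F, 1 ≤ g r k).card) ∧
    -- for `1 ≤ i ≤ d₁ - 1`, `dim A_(i,j) = (n+1)·C(d₂,j)`, with the stated basis
    (∀ i, 1 ≤ i → i ≤ d₁ - 1 → ∀ j ≤ d₂,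
      (∃ b : Module.Basis {p : Fin (n + 1) × Finset (Fin m) //
          p.2.card = j ∧ ∀ k ∈ p.2, 1 ≤ g p.1 k} K (Abi f i j),
        ∀ p, (b p : MvPolynomial (Fin (n + 1) ⊕ Fin m) K ⧸ cAnn f) =
          Ideal.Quotient.mk (cAnn f)
            (X (Sum.inl (p : Fin (n + 1) × Finset (Fin m)).1) ^ i *
              monomial ((∑ k ∈ (p : Fin (n + 1) × Finset (Fin m)).2,
                Finsupp.single k 1).mapDomain Sum.inr) 1)) ∧
      Module.finrank K (Abi f i j) = (n + 1) * d₂.choose j) ∧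
    -- `dim A_(i,0) = n + 1` for `1 ≤ i ≤ d₁`
    (∀ i, 1 ≤ i → i ≤ d₁ → Module.finrank K (Abi f i 0) = n + 1) ∧
    -- `dim A_(d₁,j)` is the number of `(d₂-j)`-element subsets whose product
    -- divides some `g_r`
    (∀ j ≤ d₂, Module.finrank K (Abi f d₁ j) =
      (((Finset.univ : Finset (Fin m)).powersetCard (d₂ - j)).filter
        fun F => ∃ r, ∀ k ∈ F, 1 ≤ g r k).card) := by
  classical
  have hf' : f = ∑ r, monomial (emb r d₁ (g r)) (1 : K) := by
    rw [hf]
    refine Finset.sum_congr rfl fun r _ => ?_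
    rw [X_pow_eq_monomial, monomial_mul, one_mul, emb]
  have key : ∀ e, cAct (monomial e (1 : K)) f =
      ∑ r, if e ≤ emb r d₁ (g r) then monomial (emb r d₁ (g r) - e) (1 : K) else 0 := by
    intro e
    rw [hf', cAct_sum]
    refine Finset.sum_congr rfl fun r _ => ?_
    rw [cAct_monomial_monomial, one_mul]
  have hsq : ∀ (r) (b : Fin m →₀ ℕ), b ≤ g r → ∀ k, b k ≤ 1 :=
    fun r b h k => le_trans (Finsupp.le_def.mp h k) (hsqfree r k)
  have hsupp : ∀ r, (g r).support.card = d₂ := fun r => by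
    rw [← sq_card (hsqfree r), hgdeg r]
  have collapse : ∀ (e) (r₀ : Fin (n + 1)) (i : ℕ), 1 ≤ i → degX e = i →
      e ≤ emb r₀ d₁ (g r₀) →
      cAct (monomial e (1 : K)) f = monomial (emb r₀ d₁ (g r₀) - e) (1 : K) := by
    intro e r₀ i hi hd hle
    rw [key, Finset.sum_eq_single_of_mem r₀ (Finset.mem_univ _) ?_, if_pos hle]
    intro r' _ hne
    exact if_neg fun hle' => hne (le_emb_unique hi hd hle' hle)
  have allzero : ∀ e, (∀ r, ¬ e ≤ emb r d₁ (g r)) → cAct (monomial e (1 : K)) f = 0 := by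
    intro e h
    rw [key]
    exact Finset.sum_eq_zero fun r _ => if_neg (h r)
  have hAbi : ∀ i j, Abi f i j =
      Submodule.map (Ideal.Quotient.mkₐ K (cAnn f)).toLinearMap
        (bihom K fun c => degX c = i ∧ degU c = j) := fun i j => rfl
  refine ⟨?_, ?_, ?_, ?_⟩
  -- Part 1 : i = 0
  · intro j hj
    have hrp : ∀ p : {F : Finset (Fin m) // F.card = j ∧ ∃ r, ∀ k ∈ F, 1 ≤ g r k},
        ind p.1 ≤ g p.2.2.choose := fun p => ind_le_iff.mpr p.2.2.choose_spec
    have hcoeff : ∀ (p : {F : Finset (Fin m) // F.card = j ∧ ∃ r, ∀ k ∈ F, 1 ≤ g r k})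
        (F' : Finset (Fin m)),
        coeff (emb p.2.2.choose d₁ (g p.2.2.choose - ind p.1))
          (cAct (monomial (emb (0 : Fin (n + 1)) 0 (ind F')) (1 : K)) f)
          = if F' = p.1 then 1 else 0 := by
      intro p F'
      rw [key, MvPolynomial.coeff_sum]
      have hstep : ∀ r : Fin (n + 1),
          coeff (emb p.2.2.choose d₁ (g p.2.2.choose - ind p.1))
            (if emb (0 : Fin (n + 1)) 0 (ind F') ≤ emb r d₁ (g r)
              then monomial (emb r d₁ (g r) - emb (0 : Fin (n + 1)) 0 (ind F')) (1 : K)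
              else 0)
            = if r = p.2.2.choose ∧ F' = p.1 then 1 else 0 := by
        intro r
        rw [emb_zero (0 : Fin (n + 1)) r (ind F'), emb_sub_emb, Nat.sub_zero]
        by_cases h1 : emb r 0 (ind F') ≤ emb r d₁ (g r)
        · rw [if_pos h1, coeff_monomial]
          by_cases h2 : r = p.2.2.choose ∧ F' = p.1
          · rw [if_pos h2, if_pos]
            rw [h2.1, h2.2]
          · rw [if_neg h2, if_neg]
            intro heq
            obtain ⟨hr, -, hb⟩ := emb_inj hd₁ heq
            have hFle : ind F' ≤ g r := (emb_le_emb_iff.mp h1).2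
            rw [hr] at hFle hb
            exact h2 ⟨hr, ind_inj (finsupp_sub_inj hFle (hrp p) hb)⟩
        · rw [if_neg h1, coeff_zero, if_neg]
          rintro ⟨rfl, rfl⟩
          exact h1 (emb_le_emb_iff.mpr ⟨Nat.zero_le _, hrp p⟩)
      rw [Finset.sum_congr rfl fun r _ => hstep r]
      by_cases hF : F' = p.1
      · simp only [hF, and_true, if_true]
        exact Fintype.sum_ite_eq' p.2.2.choose fun _ => (1 : K)
      · simp only [hF, and_false, if_false, Finset.sum_const_zero]
    have hcov : ∀ e, (degX e = 0 ∧ degU e = j) →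
        cAct (monomial e (1 : K)) f = 0 ∨
        ∃ p : {F : Finset (Fin m) // F.card = j ∧ ∃ r, ∀ k ∈ F, 1 ≤ g r k},
          cAct (monomial e (1 : K)) f
            = cAct (monomial (emb (0 : Fin (n + 1)) 0 (ind p.1)) (1 : K)) f := by
      intro e he
      obtain ⟨he1, he2⟩ := he
      by_cases hex : ∃ r, uPart e ≤ g r
      · obtain ⟨r, hr⟩ := hex
        right
        have hsqb : ∀ k, uPart e k ≤ 1 := hsq r _ hr
        have hcF : ((uPart e).support).card = j := by
          rw [← sq_card hsqb]
          simpa [degU, uPart_apply] using he2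
        have hexF : ∃ r', ∀ k ∈ (uPart e).support, 1 ≤ g r' k := by
          refine ⟨r, fun k hk => ?_⟩
          have h1 := Finsupp.mem_support_iff.mp hk
          have h2 := Finsupp.le_def.mp hr k
          omega
        refine ⟨⟨(uPart e).support, hcF, hexF⟩, ?_⟩
        refine congrArg (fun z => cAct (monomial z (1 : K)) f) ?_
        conv_lhs => rw [decomp_zero he1 0]
        rw [← eq_ind_support hsqb]
      · left
        refine allzero e fun r hle => hex ⟨r, le_emb_inr hle⟩
    obtain ⟨b, hb⟩ := master f (fun c => degX c = 0 ∧ degU c = j)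
      (fun p : {F : Finset (Fin m) // F.card = j ∧ ∃ r, ∀ k ∈ F, 1 ≤ g r k} =>
        emb (0 : Fin (n + 1)) 0 (ind p.1))
      (fun p => ⟨degX_emb _ _ _, by rw [degU_emb, sum_ind, p.2.1]⟩)
      (li_coeff _ (fun p => emb p.2.2.choose d₁ (g p.2.2.choose - ind p.1))
        (fun p => by rw [hcoeff p p.1, if_pos rfl])
        (fun p q hpq => by
          rw [hcoeff p q.1, if_neg fun h => hpq (Subtype.ext h).symm]))
      hcov
    rw [hAbi 0 j, Module.finrank_eq_card_basis b]
    exact card_subtype_filter j _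
  -- Part 2 : 1 ≤ i ≤ d₁ - 1
  · intro i hi1 hi2 j hj
    have hid : i ≤ d₁ := le_trans hi2 (Nat.sub_le _ _)
    have hdi : 1 ≤ d₁ - i := by omega
    have hvv : ∀ p : {p : Fin (n + 1) × Finset (Fin m) //
        p.2.card = j ∧ ∀ k ∈ p.2, 1 ≤ g p.1 k},
        cAct (monomial (emb p.1.1 i (ind p.1.2)) (1 : K)) f
          = monomial (emb p.1.1 (d₁ - i) (g p.1.1 - ind p.1.2)) 1 := by
      intro p
      rw [collapse _ p.1.1 i hi1 (degX_emb _ _ _)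
        (emb_le_emb_iff.mpr ⟨hid, ind_le_iff.mpr p.2.2⟩), emb_sub_emb]
    have hDinj : Function.Injective fun p : {p : Fin (n + 1) × Finset (Fin m) //
        p.2.card = j ∧ ∀ k ∈ p.2, 1 ≤ g p.1 k} =>
        emb p.1.1 (d₁ - i) (g p.1.1 - ind p.1.2) := by
      intro p q h
      obtain ⟨hr, -, hb⟩ := emb_inj hdi h
      have hq2 : ind q.1.2 ≤ g p.1.1 := by
        rw [hr]; exact ind_le_iff.mpr q.2.2
      rw [← hr] at hb
      have hFq := ind_inj (finsupp_sub_inj (ind_le_iff.mpr p.2.2) hq2 hb)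
      exact Subtype.ext (Prod.ext hr hFq)
    have hli2 : LinearIndependent K fun p : {p : Fin (n + 1) × Finset (Fin m) //
        p.2.card = j ∧ ∀ k ∈ p.2, 1 ≤ g p.1 k} =>
        cAct (monomial (emb p.1.1 i (ind p.1.2)) (1 : K)) f := by
      simp only [hvv]
      exact li_monomials hDinj
    have hcov : ∀ e, (degX e = i ∧ degU e = j) →
        cAct (monomial e (1 : K)) f = 0 ∨
        ∃ p : {p : Fin (n + 1) × Finset (Fin m) //
            p.2.card = j ∧ ∀ k ∈ p.2, 1 ≤ g p.1 k},
          cAct (monomial e (1 : K)) f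
            = cAct (monomial (emb p.1.1 i (ind p.1.2)) (1 : K)) f := by
      intro e he
      obtain ⟨he1, he2⟩ := he
      by_cases hex : ∃ r, e ≤ emb r d₁ (g r)
      · obtain ⟨r, hr⟩ := hex
        right
        have hdec : e = emb r i (uPart e) :=
          decomp_pos hi1 he1 fun r' h' => le_emb_inl hr r' h'
        have hble : uPart e ≤ g r := le_emb_inr hr
        have hsqb : ∀ k, uPart e k ≤ 1 := hsq r _ hble
        have hcF : ((uPart e).support).card = j := by
          rw [← sq_card hsqb]
          simpa [degU, uPart_apply] using he2
        have hexF : ∀ k ∈ (uPart e).support, 1 ≤ g r k := by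
          intro k hk
          have h1 := Finsupp.mem_support_iff.mp hk
          have h2 := Finsupp.le_def.mp hble k
          omega
        refine ⟨⟨(r, (uPart e).support), hcF, hexF⟩, ?_⟩
        refine congrArg (fun z => cAct (monomial z (1 : K)) f) ?_
        conv_lhs => rw [hdec]
        rw [← eq_ind_support hsqb]
      · left
        exact allzero e fun r h => hex ⟨r, h⟩
    obtain ⟨b, hb⟩ := master f (fun c => degX c = i ∧ degU c = j)
      (fun p : {p : Fin (n + 1) × Finset (Fin m) //
          p.2.card = j ∧ ∀ k ∈ p.2, 1 ≤ g p.1 k} => emb p.1.1 i (ind p.1.2))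
      (fun p => ⟨degX_emb _ _ _, by rw [degU_emb, sum_ind, p.2.1]⟩) hli2 hcov
    constructor
    · refine ⟨b, fun p => ?_⟩
      rw [X_pow_eq_monomial, monomial_mul, one_mul]
      exact hb p
    · rw [hAbi i j, Module.finrank_eq_card_basis b]
      have e2 : {p : Fin (n + 1) × Finset (Fin m) //
          p.2.card = j ∧ ∀ k ∈ p.2, 1 ≤ g p.1 k}
          ≃ Σ r : Fin (n + 1), {F : Finset (Fin m) // F.card = j ∧ F ⊆ (g r).support} :=
        { toFun := fun p => ⟨p.1.1, p.1.2, p.2.1, fun k hk =>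
            Finsupp.mem_support_iff.mpr (Nat.one_le_iff_ne_zero.mp (p.2.2 k hk))⟩
          invFun := fun x => ⟨(x.1, x.2.1), x.2.2.1, fun k hk =>
            Nat.one_le_iff_ne_zero.mpr (Finsupp.mem_support_iff.mp (x.2.2.2 hk))⟩
          left_inv := fun p => rfl
          right_inv := fun x => rfl }
      rw [Fintype.card_congr e2, Fintype.card_sigma]
      have hone : ∀ r : Fin (n + 1),
          Fintype.card {F : Finset (Fin m) // F.card = j ∧ F ⊆ (g r).support}
            = d₂.choose j := by
        intro r
        rw [Fintype.card_subtype]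
        have hfilter : Finset.univ.filter
            (fun F : Finset (Fin m) => F.card = j ∧ F ⊆ (g r).support)
            = (g r).support.powersetCard j := by
          ext F
          simp [Finset.mem_powersetCard, and_comm]
        rw [hfilter, Finset.card_powersetCard, hsupp r]
      simp only [hone]
      rw [Finset.sum_const, Finset.card_univ, Fintype.card_fin, smul_eq_mul]
  -- Part 3 : j = 0
  · intro i hi1 hi2
    have hvv : ∀ r : Fin (n + 1), cAct (monomial (emb r i 0) (1 : K)) f
        = monomial (emb r (d₁ - i) (g r)) 1 := by
      intro r
      rw [collapse _ r i hi1 (degX_emb _ _ _)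
        (emb_le_emb_iff.mpr ⟨hi2, zero_le⟩), emb_sub_emb, tsub_zero]
    have hDinj : Function.Injective fun r : Fin (n + 1) => emb r (d₁ - i) (g r) := by
      intro r r' h
      replace h : emb r (d₁ - i) (g r) = emb r' (d₁ - i) (g r') := h
      by_cases hcase : d₁ - i = 0
      · rw [hcase, emb_zero_eq, emb_zero_eq] at h
        exact hginj (Finsupp.mapDomain_injective Sum.inr_injective h)
      · exact (emb_inj (by omega) h).1
    have hli3 : LinearIndependent K fun r : Fin (n + 1) =>
        cAct (monomial (emb r i 0) (1 : K)) f := by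
      simp only [hvv]
      exact li_monomials hDinj
    have hcov : ∀ e, (degX e = i ∧ degU e = 0) →
        cAct (monomial e (1 : K)) f = 0 ∨ ∃ r : Fin (n + 1),
          cAct (monomial e (1 : K)) f = cAct (monomial (emb r i 0) (1 : K)) f := by
      intro e he
      obtain ⟨he1, he2⟩ := he
      by_cases hex : ∃ r, e ≤ emb r d₁ (g r)
      · obtain ⟨r, hr⟩ := hex
        right
        refine ⟨r, congrArg (fun z => cAct (monomial z (1 : K)) f) ?_⟩
        have hu0 : uPart e = 0 := by
          ext k
          have h0 : e (Sum.inr k) = 0 :=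
            (by simpa [degU] using he2 : ∀ i : Fin m, e (Sum.inr i) = 0) k
          simp [uPart_apply, h0]
        rw [show e = emb r i (uPart e) from
          decomp_pos hi1 he1 fun r' h' => le_emb_inl hr r' h', hu0]
      · left
        exact allzero e fun r h => hex ⟨r, h⟩
    obtain ⟨b, hb⟩ := master f (fun c => degX c = i ∧ degU c = 0)
      (fun r : Fin (n + 1) => emb r i 0)
      (fun r => ⟨degX_emb _ _ _, by rw [degU_emb]; simp⟩) hli3 hcov
    rw [hAbi i 0, Module.finrank_eq_card_basis b, Fintype.card_fin]
  -- Part 4 : i = d₁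
  · intro j hj
    have hrp4 : ∀ p : {F : Finset (Fin m) // F.card = d₂ - j ∧ ∃ r, ∀ k ∈ F, 1 ≤ g r k},
        ind p.1 ≤ g p.2.2.choose := fun p => ind_le_iff.mpr p.2.2.choose_spec
    have hvv : ∀ p : {F : Finset (Fin m) // F.card = d₂ - j ∧ ∃ r, ∀ k ∈ F, 1 ≤ g r k},
        cAct (monomial (emb p.2.2.choose d₁ (g p.2.2.choose - ind p.1)) (1 : K)) f
          = monomial (emb (0 : Fin (n + 1)) 0 (ind p.1)) 1 := by
      intro p
      rw [collapse _ p.2.2.choose d₁ hd₁ (degX_emb _ _ _)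
        (emb_le_emb_iff.mpr ⟨le_refl _, tsub_le_self⟩),
        emb_sub_emb, Nat.sub_self, finsupp_sub_sub (hrp4 p),
        emb_zero p.2.2.choose (0 : Fin (n + 1))]
    have hDinj : Function.Injective fun p : {F : Finset (Fin m) //
        F.card = d₂ - j ∧ ∃ r, ∀ k ∈ F, 1 ≤ g r k} =>
        emb (0 : Fin (n + 1)) 0 (ind p.1) := by
      intro p q h
      replace h : emb (0 : Fin (n + 1)) 0 (ind p.1) = emb (0 : Fin (n + 1)) 0 (ind q.1) := h
      rw [emb_zero_eq, emb_zero_eq] at h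
      exact Subtype.ext (ind_inj (Finsupp.mapDomain_injective Sum.inr_injective h))
    have hli4 : LinearIndependent K fun p : {F : Finset (Fin m) //
        F.card = d₂ - j ∧ ∃ r, ∀ k ∈ F, 1 ≤ g r k} =>
        cAct (monomial (emb p.2.2.choose d₁ (g p.2.2.choose - ind p.1)) (1 : K)) f := by
      simp only [hvv]
      exact li_monomials hDinj
    have hcov : ∀ e, (degX e = d₁ ∧ degU e = j) →
        cAct (monomial e (1 : K)) f = 0 ∨
        ∃ p : {F : Finset (Fin m) // F.card = d₂ - j ∧ ∃ r, ∀ k ∈ F, 1 ≤ g r k},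
          cAct (monomial e (1 : K)) f
            = cAct (monomial (emb p.2.2.choose d₁ (g p.2.2.choose - ind p.1)) (1 : K)) f := by
      intro e he
      obtain ⟨he1, he2⟩ := he
      by_cases hex : ∃ r, e ≤ emb r d₁ (g r)
      · obtain ⟨r, hr⟩ := hex
        right
        have hble : uPart e ≤ g r := le_emb_inr hr
        have hh : ∀ k, (g r - uPart e) k ≤ 1 := hsq r _ tsub_le_self
        have hje : ∑ k, uPart e k = j := by simpa [degU, uPart_apply] using he2
        have hsum : ∑ k, (g r - uPart e) k = d₂ - j := by
          rw [sum_sub_finsupp hble, hgdeg r, hje]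
        have hcF : ((g r - uPart e).support).card = d₂ - j := by
          rw [← sq_card hh]; exact hsum
        have hexF : ∃ r', ∀ k ∈ (g r - uPart e).support, 1 ≤ g r' k := by
          refine ⟨r, fun k hk => ?_⟩
          have h1 := Finsupp.mem_support_iff.mp hk
          have h2 : (g r - uPart e) k ≤ g r k := by
            rw [Finsupp.tsub_apply]; omega
          omega
        have himg : cAct (monomial e (1 : K)) f
            = monomial (emb (0 : Fin (n + 1)) 0 (ind (g r - uPart e).support)) 1 := by
          rw [collapse e r d₁ hd₁ he1 hr]
          congr 1
          conv_lhs => rw [show e = emb r d₁ (uPart e) from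
            decomp_pos hd₁ he1 fun r' h' => le_emb_inl hr r' h']
          rw [emb_sub_emb, Nat.sub_self, ← eq_ind_support hh,
            emb_zero r (0 : Fin (n + 1))]
        exact ⟨⟨(g r - uPart e).support, hcF, hexF⟩,
          himg.trans (hvv ⟨(g r - uPart e).support, hcF, hexF⟩).symm⟩
      · left
        exact allzero e fun r h => hex ⟨r, h⟩
    obtain ⟨b, hb⟩ := master f (fun c => degX c = d₁ ∧ degU c = j)
      (fun p : {F : Finset (Fin m) // F.card = d₂ - j ∧ ∃ r, ∀ k ∈ F, 1 ≤ g r k} =>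
        emb p.2.2.choose d₁ (g p.2.2.choose - ind p.1))
      (fun p => ⟨degX_emb _ _ _, by
        rw [degU_emb, sum_sub_finsupp (hrp4 p), hgdeg, sum_ind, p.2.1]
        omega⟩) hli4 hcov
    rw [hAbi d₁ j, Module.finrank_eq_card_basis b]
    exact card_subtype_filter (d₂ - j) _

end CW
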